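/- (SMSP is equivalent to sufficient impurity decrease.) A function f : {−1,1}^d → ℝ satisfies SMSP if and only if there exists λ > 0 such that f satisfies SID(λ), i.e., for every subcube C ⊆ {−1,1}^d with Var(f(X) | X ∈ C) > 0 one has max_{1≤k≤d} Corr²(f(X), X_k | X ∈ C) ≥ λ, where X is uniformly distributed on {−1,1}^d. -/

import Mathlib

open MeasureTheory ProbabilityTheory

namespace GreedyTrees

/-- The `±1` value of a Boolean coordinate. -/
def sgn (b : Bool) : ℝ := if b then 1 else -1

variable {d n : ℕ}

/-- The Fourier character (monomial) `χ_S` on the Boolean cube `{±1}^d`. -/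
def chi (S : Finset (Fin d)) (x : Fin d → Bool) : ℝ := ∏ j ∈ S, sgn (x j)

/-- Expectation with respect to the uniform distribution on `{±1}^d`. -/
noncomputable def cubeMean (f : (Fin d → Bool) → ℝ) : ℝ := (∑ x : Fin d → Bool, f x) / 2 ^ d

/-- The `L²` risk `R(g, f) = E_{X ∼ ν} (g X - f X)²` for `ν` uniform on `{±1}^d`. -/
noncomputable def cubeRisk (g f : (Fin d → Bool) → ℝ) : ℝ := cubeMean fun x => (g x - f x) ^ 2

/-- Variance with respect to the uniform distribution on `{±1}^d`. -/
noncomputable def cubeVar (f : (Fin d → Bool) → ℝ) : ℝ := cubeMean fun x => (f x - cubeMean f) ^ 2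

/-- Supremum norm of a function on the cube. -/
noncomputable def supAbs (f : (Fin d → Bool) → ℝ) : ℝ := ⨆ x, |f x|

/-- Fourier coefficient `α_S` of `f`. -/
noncomputable def fourierCoeff (f : (Fin d → Bool) → ℝ) (S : Finset (Fin d)) : ℝ :=
  cubeMean fun x => f x * chi S x

open Classical in
/-- Fourier support `𝒮` of `f` : subsets with nonzero Fourier coefficient. -/
noncomputable def fourierSupport (f : (Fin d → Bool) → ℝ) : Finset (Finset (Fin d)) :=
  Finset.univ.filter fun S => fourierCoeff f S ≠ 0

/-- Union of a list of finsets. -/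
def listUnion (L : List (Finset (Fin d))) : Finset (Fin d) := L.foldr (· ∪ ·) ∅

/-- Staircase condition: each entry brings in at most one new coordinate. -/
def Staircase (L : List (Finset (Fin d))) : Prop :=
  ∀ (i : ℕ) (h : i < L.length), ((L.get ⟨i, h⟩) \ listUnion (L.take i)).card ≤ 1

/-- The merged-staircase property (MSP) of a collection of subsets. -/
def MSP (Sc : Finset (Finset (Fin d))) : Prop :=
  ∃ L : List (Finset (Fin d)), L.toFinset = Sc ∧ L.Nodup ∧ Staircase L

/-- `S` is connected to `∅` in the Fourier graph of the collection `Sc`. -/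
def ReachesEmpty (Sc : Finset (Finset (Fin d))) (S : Finset (Fin d)) : Prop :=
  ∃ L : List (Finset (Fin d)), (∀ T ∈ L, T ∈ Sc) ∧ S ∈ L ∧ Staircase L

open Classical in
/-- `𝒮_MSP` : the part of the collection connected to `∅` in the Fourier graph. -/
noncomputable def mspPart (Sc : Finset (Finset (Fin d))) : Finset (Finset (Fin d)) :=
  Sc.filter fun S => ReachesEmpty Sc S

/-- `T` is a traversal of a collection: it meets every member in ≥ 2 coordinates. -/
def IsTraversal (Sc : Finset (Finset (Fin d))) (T : Finset (Fin d)) : Prop :=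
  ∀ S ∈ Sc, 2 ≤ (T ∩ S).card

/-- The MSP residual `r_MSP = Σ_{S ∈ 𝒮 \ 𝒮_MSP} α_S χ_S` of `f`. -/
noncomputable def mspResidual (f : (Fin d → Bool) → ℝ) : (Fin d → Bool) → ℝ :=
  fun x => ∑ S ∈ fourierSupport f \ mspPart (fourierSupport f), fourierCoeff f S * chi S x

/-- Total Fourier weight `w(𝒜) = Σ_{S ∈ 𝒜} α_S²` of a collection of vertices. -/
noncomputable def wt (f : (Fin d → Bool) → ℝ) (A : Finset (Finset (Fin d))) : ℝ :=
  ∑ S ∈ A, fourierCoeff f S ^ 2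

/-- The subcube (cell) `{x : x_j = z_j for j ∈ J}` as a finset of points. -/
def subcube (J : Finset (Fin d)) (z : Fin d → Bool) : Finset (Fin d → Bool) :=
  Finset.univ.filter fun x => ∀ j ∈ J, x j = z j

/-- Conditional mean of `f` on a subcube. -/
noncomputable def subcubeMean (f : (Fin d → Bool) → ℝ) (J : Finset (Fin d))
    (z : Fin d → Bool) : ℝ :=
  (∑ x ∈ subcube J z, f x) / (subcube J z).card

/-- Conditional covariance of `f` and `g` on a subcube. -/
noncomputable def subcubeCov (f g : (Fin d → Bool) → ℝ) (J : Finset (Fin d))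
    (z : Fin d → Bool) : ℝ :=
  (∑ x ∈ subcube J z, (f x - subcubeMean f J z) * (g x - subcubeMean g J z)) /
    (subcube J z).card

/-- Conditional variance of `f` on a subcube. -/
noncomputable def subcubeVar (f : (Fin d → Bool) → ℝ) (J : Finset (Fin d))
    (z : Fin d → Bool) : ℝ :=
  subcubeCov f f J z

/-- The restriction of `f` to the subcube `(J, z)` viewed as a function of the
free coordinates. -/
def restrictCube (f : (Fin d → Bool) → ℝ) (J : Finset (Fin d)) (z : Fin d → Bool) :
    (Fin d → Bool) → ℝ :=
  fun x => f fun j => if j ∈ J then z j else x j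

/-- `f` (as a function) satisfies the merged-staircase property. -/
def MSPfun (f : (Fin d → Bool) → ℝ) : Prop := MSP (fourierSupport f)

/-- `f` satisfies the stable merged-staircase property: every restriction to a
subcube satisfies MSP. -/
def SMSPfun (f : (Fin d → Bool) → ℝ) : Prop :=
  ∀ (J : Finset (Fin d)) (z : Fin d → Bool), MSPfun (restrictCube f J z)

/-- `f ∈ SMSP(λ)` : for every subcube on which `f` is nonconstant,
`max_{k ∉ J(C)} Cov²(f(X), X_k | X ∈ C) · 2^{-|J(C) ∩ S*|} ≥ λ`. -/
def SMSPlam (f : (Fin d → Bool) → ℝ) (Sstar : Finset (Fin d)) (lam : ℝ) : Prop :=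
  ∀ (J : Finset (Fin d)) (z : Fin d → Bool),
    (∃ x ∈ subcube J z, ∃ y ∈ subcube J z, f x ≠ f y) →
    ∃ k ∉ J, lam ≤ (subcubeCov f (fun y => sgn (y k)) J z) ^ 2 *
      ((2 : ℝ) ^ (J ∩ Sstar).card)⁻¹

/-- Sub-Gaussian random variable with parameter `σ` (via the MGF bound). -/
def IsSubGaussian {Ω : Type*} [MeasurableSpace Ω] (μ : Measure Ω) (Z : Ω → ℝ)
    (σ : ℝ) : Prop :=
  ∀ t : ℝ, ∫ ω, Real.exp (t * Z ω) ∂μ ≤ Real.exp (σ ^ 2 * t ^ 2 / 2)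

/-- Indices of the samples lying in the cell determined by the values of `x`
on the coordinates in `J`. -/
def cellIdx (X : Fin n → Fin d → Bool) (x : Fin d → Bool) (J : Finset (Fin d)) :
    Finset (Fin n) :=
  Finset.univ.filter fun i => ∀ j ∈ J, X i j = x j

/-- Value of a split criterion `F` at coordinate `k` in a cell: it depends on
the data only through the marginal data `{(X_{ik}, Y_i) : i in the cell}`. -/
def critVal (F : Multiset (Bool × ℝ) → ℝ) (X : Fin n → Fin d → Bool) (Y : Fin n → ℝ)
    (x : Fin d → Bool) (J : Finset (Fin d)) (k : Fin d) : ℝ :=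
  F ((cellIdx X x J).val.map fun i => (X i k, Y i))

/-- Abstract model of a regression tree fitted by a greedy tree algorithm:
for every dataset and query point it records the coordinates split on along the
root-to-leaf path of the query point.  Each split coordinate maximizes a fixed
sign-flip invariant criterion `F` of the marginal data in the current cell,
every split cell contains at least one sample, and the path depends on the
query point only through the coordinates split along it (tree structure). -/
structure GreedyTreeModel (n d : ℕ) where
  F : Multiset (Bool × ℝ) → ℝ
  flip_invariant : ∀ m : Multiset (Bool × ℝ), F (m.map fun p => (!p.1, p.2)) = F m
  splits : (Fin n → Fin d → Bool) → (Fin n → ℝ) → (Fin d → Bool) → List (Fin d)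
  nodup : ∀ X Y x, (splits X Y x).Nodup
  greedy : ∀ X Y x (t : ℕ) (ht : t < (splits X Y x).length) (k : Fin d),
      k ∉ ((splits X Y x).take t).toFinset →
      critVal F X Y x ((splits X Y x).take t).toFinset k ≤
        critVal F X Y x ((splits X Y x).take t).toFinset ((splits X Y x).get ⟨t, ht⟩)
  nonempty_internal : ∀ X Y x (t : ℕ), t < (splits X Y x).length →
      (cellIdx X x ((splits X Y x).take t).toFinset).Nonempty
  consistent : ∀ X Y x x', (∀ j ∈ splits X Y x, x j = x' j) → splits X Y x' = splits X Y x

/-- The set `J(x; D_n, Θ)` of coordinates split along the query path of `x`. -/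
def GreedyTreeModel.queryCoords (M : GreedyTreeModel n d) (X : Fin n → Fin d → Bool)
    (Y : Fin n → ℝ) (x : Fin d → Bool) : Finset (Fin d) :=
  (M.splits X Y x).toFinset

/-- Prediction of the fitted tree: the mean response in the leaf containing `x`. -/
noncomputable def GreedyTreeModel.pred (M : GreedyTreeModel n d)
    (X : Fin n → Fin d → Bool) (Y : Fin n → ℝ) (x : Fin d → Bool) : ℝ :=
  (∑ i ∈ cellIdx X x (M.queryCoords X Y x), Y i) /
    (cellIdx X x (M.queryCoords X Y x)).card

/-- Mean of a multiset of reals. -/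
noncomputable def msetMean (m : Multiset ℝ) : ℝ := m.sum / (m.card : ℝ)

/-- Empirical variance (impurity) of a multiset of reals. -/
noncomputable def msetVar (m : Multiset ℝ) : ℝ :=
  ((m.map fun y => (y - msetMean m) ^ 2).sum) / (m.card : ℝ)

/-- The CART impurity decrease, as a function of the marginal data
`{(X_{ik}, Y_i)}` of a coordinate in a cell. -/
noncomputable def impurityDecrease (m : Multiset (Bool × ℝ)) : ℝ :=
  msetVar (m.map Prod.snd) -
    (((m.filter fun p => p.1 = true).card : ℝ) / (m.card : ℝ)) *
      msetVar ((m.filter fun p => p.1 = true).map Prod.snd) -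
    (((m.filter fun p => p.1 = false).card : ℝ) / (m.card : ℝ)) *
      msetVar ((m.filter fun p => p.1 = false).map Prod.snd)

/-- A CART model: a greedy tree model whose criterion is the impurity decrease,
grown with the minimum impurity decrease stopping rule with threshold `γ`. -/
structure CARTModel (n d : ℕ) (γ : ℝ) extends GreedyTreeModel n d where
  F_eq : F = impurityDecrease
  continue_split : ∀ X Y x (t : ℕ) (ht : t < (splits X Y x).length),
      γ ≤ (((cellIdx X x ((splits X Y x).take t).toFinset).card : ℝ) / (n : ℝ)) *
        critVal impurityDecrease X Y x ((splits X Y x).take t).toFinset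
          ((splits X Y x).get ⟨t, ht⟩)
  stop_leaf : ∀ X Y x (k : Fin d), k ∉ (splits X Y x).toFinset →
      (((cellIdx X x (splits X Y x).toFinset).card : ℝ) / (n : ℝ)) *
        critVal impurityDecrease X Y x (splits X Y x).toFinset k < γ

/-- Number of samples in the subcube `(J, z)`. -/
def cellN (X : Fin n → Fin d → Bool) (J : Finset (Fin d)) (z : Fin d → Bool) : ℕ :=
  (cellIdx X z J).card

/-- Mean response over the samples in the subcube `(J, z)`. -/
noncomputable def cellYbar (X : Fin n → Fin d → Bool) (Y : Fin n → ℝ)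
    (J : Finset (Fin d)) (z : Fin d → Bool) : ℝ :=
  (∑ i ∈ cellIdx X z J, Y i) / (cellN X J z : ℝ)

/-- Empirical square-root impurity decrease
`Δ̂^{1/2}(k; C, D) = √(p_k(C)(1 - p_k(C))) (Ȳ_{T_{k,1}C} - Ȳ_{T_{k,-1}C})`. -/
noncomputable def empSqrtID (X : Fin n → Fin d → Bool) (Y : Fin n → ℝ)
    (J : Finset (Fin d)) (z : Fin d → Bool) (k : Fin d) : ℝ :=
  Real.sqrt (((cellN X (insert k J) (Function.update z k true) : ℝ) / (cellN X J z : ℝ)) *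
      (1 - (cellN X (insert k J) (Function.update z k true) : ℝ) / (cellN X J z : ℝ))) *
    (cellYbar X Y (insert k J) (Function.update z k true) -
      cellYbar X Y (insert k J) (Function.update z k false))

/-- Population square-root impurity decrease
`Δ^{1/2}(k; C) = (E[Y | X ∈ T_{k,1}C] - E[Y | X ∈ T_{k,-1}C]) / 2`
(for zero-mean noise, conditional means of `Y` equal conditional means of `f*`). -/
noncomputable def popSqrtID (f : (Fin d → Bool) → ℝ) (J : Finset (Fin d))
    (z : Fin d → Bool) (k : Fin d) : ℝ :=
  (subcubeMean f (insert k J) (Function.update z k true) -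
    subcubeMean f (insert k J) (Function.update z k false)) / 2

/-- Binary decision tree with axis-aligned splits and real leaf labels. -/
inductive TreeFun (d : ℕ) : Type
  | leaf : ℝ → TreeFun d
  | node : Fin d → TreeFun d → TreeFun d → TreeFun d

/-- Evaluation of a tree as a piecewise constant function on the cube. -/
def TreeFun.eval : TreeFun d → (Fin d → Bool) → ℝ
  | .leaf c, _ => c
  | .node k l r, x => if x k then TreeFun.eval r x else TreeFun.eval l x

/-- Depth of a tree. -/
def TreeFun.depth : TreeFun d → ℕ
  | .leaf _ => 0
  | .node _ l r => max (TreeFun.depth l) (TreeFun.depth r) + 1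

/-- All leaf labels bounded by `M` in absolute value. -/
def TreeFun.leafBound (M : ℝ) : TreeFun d → Prop
  | .leaf c => |c| ≤ M
  | .node _ l r => TreeFun.leafBound M l ∧ TreeFun.leafBound M r

/-- Empirical `L²` risk of a tree on a dataset. -/
noncomputable def empRisk (D : Fin n → (Fin d → Bool) × ℝ) (t : TreeFun d) : ℝ :=
  (∑ i, ((D i).2 - t.eval (D i).1) ^ 2) / n

/-- A greedy tree grown along the query path of a point with every cell being
split (no stopping rule): the path has full length `d`. -/
structure FullGreedyPath (n d : ℕ) where
  F : Multiset (Bool × ℝ) → ℝ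
  flip_invariant : ∀ m : Multiset (Bool × ℝ), F (m.map fun p => (!p.1, p.2)) = F m
  splits : (Fin n → Fin d → Bool) → (Fin n → ℝ) → (Fin d → Bool) → List (Fin d)
  nodup : ∀ X Y x, (splits X Y x).Nodup
  length_eq : ∀ X Y x, (splits X Y x).length = d
  greedy : ∀ X Y x (t : ℕ) (ht : t < (splits X Y x).length) (k : Fin d),
      k ∉ ((splits X Y x).take t).toFinset →
      critVal F X Y x ((splits X Y x).take t).toFinset k ≤
        critVal F X Y x ((splits X Y x).take t).toFinset ((splits X Y x).get ⟨t, ht⟩)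


section SMSPProofAux

variable {d : ℕ}

lemma sgn_sq (b : Bool) : sgn b * sgn b = 1 := by cases b <;> norm_num [sgn]

lemma chi_empty (x : Fin d → Bool) : chi (∅ : Finset (Fin d)) x = 1 := by simp [chi]

lemma chi_eq_prod_univ (S : Finset (Fin d)) (x : Fin d → Bool) :
    chi S x = ∏ j : Fin d, (if j ∈ S then sgn (x j) else 1) := by
  rw [chi, Finset.prod_ite_mem Finset.univ S (fun j => sgn (x j)), Finset.univ_inter]

lemma sum_pi_bool (F : Fin d → Bool → ℝ) :
    ∑ x : Fin d → Bool, ∏ j, F j (x j) = ∏ j, (F j true + F j false) := by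
  classical
  have h := Finset.prod_univ_sum (fun _ : Fin d => (Finset.univ : Finset Bool)) F
  rw [Fintype.piFinset_univ] at h
  rw [← h]
  exact Finset.prod_congr rfl fun j _ => by simp

lemma sum_chi_mul_chi (S T : Finset (Fin d)) :
    ∑ x : Fin d → Bool, chi S x * chi T x = if S = T then (2:ℝ)^d else 0 := by
  classical
  have h1 : ∀ x : Fin d → Bool, chi S x * chi T x
      = ∏ j, ((if j ∈ S then sgn (x j) else 1) * (if j ∈ T then sgn (x j) else 1)) := by
    intro x; rw [chi_eq_prod_univ, chi_eq_prod_univ, ← Finset.prod_mul_distrib]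
  calc ∑ x : Fin d → Bool, chi S x * chi T x
      = ∑ x : Fin d → Bool, ∏ j, ((if j ∈ S then sgn (x j) else 1) * (if j ∈ T then sgn (x j) else 1)) :=
        Finset.sum_congr rfl fun x _ => h1 x
    _ = ∏ j, ((if j ∈ S then sgn true else 1) * (if j ∈ T then sgn true else 1)
          + (if j ∈ S then sgn false else 1) * (if j ∈ T then sgn false else 1)) :=
        sum_pi_bool (fun j b => (if j ∈ S then sgn b else 1) * (if j ∈ T then sgn b else 1))
    _ = if S = T then (2:ℝ)^d else 0 := by
        by_cases h : S = T
        · subst h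
          rw [if_pos rfl]
          have key : ∀ j : Fin d, ((if j ∈ S then sgn true else 1) * (if j ∈ S then sgn true else 1)
              + (if j ∈ S then sgn false else 1) * (if j ∈ S then sgn false else 1)) = 2 := by
            intro j; by_cases hj : j ∈ S <;> simp [hj, sgn] <;> norm_num
          rw [Finset.prod_congr rfl fun j _ => key j, Finset.prod_const, Finset.card_univ,
            Fintype.card_fin]
        · rw [if_neg h]
          obtain ⟨j, hj⟩ : ∃ j, ¬ (j ∈ S ↔ j ∈ T) := by
            by_contra hc; push_neg at hc
            exact h (Finset.ext fun j => hc j)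
          refine Finset.prod_eq_zero (Finset.mem_univ j) ?_
          by_cases hjS : j ∈ S <;> by_cases hjT : j ∈ T <;>
            simp [hjS, hjT, sgn] at hj ⊢ <;> norm_num

lemma cubeMean_chi_mul_chi (S T : Finset (Fin d)) :
    cubeMean (fun x => chi S x * chi T x) = if S = T then (1:ℝ) else 0 := by
  rw [cubeMean, sum_chi_mul_chi]
  have h2 : (2:ℝ)^d ≠ 0 := by positivity
  split <;> simp [h2]

lemma sum_chi_point (x y : Fin d → Bool) :
    ∑ S : Finset (Fin d), chi S x * chi S y = if x = y then (2:ℝ)^d else 0 := by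
  classical
  have h1 : ∀ S : Finset (Fin d), chi S x * chi S y = ∏ j ∈ S, (sgn (x j) * sgn (y j)) := by
    intro S; rw [chi, chi, ← Finset.prod_mul_distrib]
  have h2 := Finset.prod_add (fun j : Fin d => sgn (x j) * sgn (y j)) (fun _ => (1:ℝ)) Finset.univ
  simp only [Finset.prod_const_one, mul_one, Finset.powerset_univ] at h2
  calc ∑ S : Finset (Fin d), chi S x * chi S y
      = ∑ S : Finset (Fin d), ∏ j ∈ S, (sgn (x j) * sgn (y j)) :=
        Finset.sum_congr rfl fun S _ => h1 S
    _ = ∏ j, (sgn (x j) * sgn (y j) + 1) := h2.symm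
    _ = if x = y then (2:ℝ)^d else 0 := by
        by_cases h : x = y
        · subst h
          rw [if_pos rfl]
          rw [Finset.prod_congr rfl fun j _ => by rw [sgn_sq],
            Finset.prod_const, Finset.card_univ, Fintype.card_fin]
          norm_num
        · rw [if_neg h]
          obtain ⟨j, hj⟩ : ∃ j, x j ≠ y j := by
            by_contra hc; push_neg at hc; exact h (funext hc)
          refine Finset.prod_eq_zero (Finset.mem_univ j) ?_
          cases hxj : x j <;> cases hyj : y j <;> rw [hxj, hyj] at hj <;>
            simp [sgn] at hj ⊢ <;> norm_num

lemma cubeMean_sum {ι : Type*} (A : Finset ι) (h : ι → (Fin d → Bool) → ℝ) :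
    cubeMean (fun x => ∑ i ∈ A, h i x) = ∑ i ∈ A, cubeMean (h i) := by
  rw [cubeMean, Finset.sum_comm, Finset.sum_div]
  rfl

lemma cubeMean_const_mul (c : ℝ) (h : (Fin d → Bool) → ℝ) :
    cubeMean (fun x => c * h x) = c * cubeMean h := by
  rw [cubeMean, cubeMean, ← Finset.mul_sum, mul_div_assoc]

lemma cubeMean_add (a b : (Fin d → Bool) → ℝ) :
    cubeMean (fun x => a x + b x) = cubeMean a + cubeMean b := by
  rw [cubeMean, cubeMean, cubeMean, Finset.sum_add_distrib, add_div]

lemma cubeMean_const (c : ℝ) : cubeMean (fun _ : Fin d → Bool => c) = c := by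
  have h : ((Finset.univ : Finset (Fin d → Bool)).card : ℝ) = 2 ^ d := by
    rw [Finset.card_univ]
    simp [Fintype.card_fun]
  rw [cubeMean, Finset.sum_const, nsmul_eq_mul, h, mul_comm, mul_div_assoc,
    div_self (by positivity : (2:ℝ)^d ≠ 0), mul_one]

lemma fourier_inversion (g : (Fin d → Bool) → ℝ) (x : Fin d → Bool) :
    ∑ S : Finset (Fin d), fourierCoeff g S * chi S x = g x := by
  classical
  have hpow : (0:ℝ) < 2 ^ d := by positivity
  simp only [fourierCoeff, cubeMean]
  calc ∑ S : Finset (Fin d), (∑ y, g y * chi S y) / 2 ^ d * chi S x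
      = ∑ S : Finset (Fin d), ∑ y, g y * (chi S y * chi S x) / 2 ^ d := by
        refine Finset.sum_congr rfl fun S _ => ?_
        rw [div_mul_eq_mul_div, Finset.sum_mul, Finset.sum_div]
        exact Finset.sum_congr rfl fun y _ => by ring
    _ = ∑ y, ∑ S : Finset (Fin d), g y * (chi S y * chi S x) / 2 ^ d := Finset.sum_comm
    _ = ∑ y, g y * (if y = x then (2:ℝ)^d else 0) / 2^d := by
        refine Finset.sum_congr rfl fun y _ => ?_
        rw [← sum_chi_point y x, ← Finset.sum_div, ← Finset.mul_sum]
    _ = g x := by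
        rw [Finset.sum_eq_single x]
        · rw [if_pos rfl, mul_div_assoc, div_self hpow.ne', mul_one]
        · intro y _ hy; rw [if_neg hy, mul_zero, zero_div]
        · intro h; exact absurd (Finset.mem_univ x) h

lemma coeff_empty (g : (Fin d → Bool) → ℝ) : fourierCoeff g ∅ = cubeMean g := by
  rw [fourierCoeff]
  congr 1
  funext x
  rw [chi_empty, mul_one]

lemma sub_mean_eq (g : (Fin d → Bool) → ℝ) (x : Fin d → Bool) :
    g x - cubeMean g
      = ∑ S ∈ Finset.univ.erase (∅ : Finset (Fin d)), fourierCoeff g S * chi S x := by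
  have h := fourier_inversion g x
  rw [← Finset.add_sum_erase _ _ (Finset.mem_univ (∅ : Finset (Fin d)))] at h
  rw [chi_empty, mul_one, coeff_empty] at h
  linarith

lemma cubeVar_parseval (g : (Fin d → Bool) → ℝ) :
    cubeVar g = ∑ S ∈ Finset.univ.erase (∅ : Finset (Fin d)), fourierCoeff g S ^ 2 := by
  classical
  have step1 : cubeVar g = ∑ S ∈ Finset.univ.erase (∅ : Finset (Fin d)),
      ∑ T ∈ Finset.univ.erase (∅ : Finset (Fin d)),
        fourierCoeff g S * fourierCoeff g T * cubeMean (fun x => chi S x * chi T x) := by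
    rw [cubeVar]
    have hfe : (fun x => (g x - cubeMean g) ^ 2)
        = fun x => ∑ S ∈ Finset.univ.erase (∅ : Finset (Fin d)),
            ∑ T ∈ Finset.univ.erase (∅ : Finset (Fin d)),
              fourierCoeff g S * fourierCoeff g T * (chi S x * chi T x) := by
      funext x
      rw [sq, sub_mean_eq g x, Finset.sum_mul_sum]
      exact Finset.sum_congr rfl fun S _ => Finset.sum_congr rfl fun T _ => by ring
    rw [hfe, cubeMean_sum]
    refine Finset.sum_congr rfl fun S _ => ?_
    rw [cubeMean_sum]
    exact Finset.sum_congr rfl fun T _ => cubeMean_const_mul _ _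
  rw [step1]
  refine Finset.sum_congr rfl fun S hS => ?_
  rw [Finset.sum_eq_single S]
  · rw [cubeMean_chi_mul_chi, if_pos rfl, mul_one, sq]
  · intro T _ hT
    rw [cubeMean_chi_mul_chi, if_neg (fun h => hT h.symm), mul_zero]
  · intro h; exact absurd hS h

lemma cubeVar_pos_iff (g : (Fin d → Bool) → ℝ) :
    0 < cubeVar g ↔ ∃ S : Finset (Fin d), S ≠ ∅ ∧ fourierCoeff g S ≠ 0 := by
  classical
  rw [cubeVar_parseval]
  constructor
  · intro h
    by_contra hc
    push_neg at hc
    have hz : ∑ S ∈ Finset.univ.erase (∅ : Finset (Fin d)), fourierCoeff g S ^ 2 = 0 :=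
      Finset.sum_eq_zero fun S hS => by
        rw [hc S (Finset.nonempty_iff_ne_empty.mpr (Finset.mem_erase.mp hS).1)]; norm_num
    rw [hz] at h
    exact lt_irrefl 0 h
  · rintro ⟨S, hS, hcoef⟩
    refine Finset.sum_pos' (fun T _ => sq_nonneg _)
      ⟨S, Finset.mem_erase.mpr ⟨hS, Finset.mem_univ _⟩,
        (sq_nonneg _).lt_of_ne (Ne.symm (pow_ne_zero 2 hcoef))⟩

end SMSPProofAux

section SMSPProofAux2

variable {d : ℕ}

lemma mem_subcube {J : Finset (Fin d)} {z x : Fin d → Bool} :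
    x ∈ subcube J z ↔ ∀ j ∈ J, x j = z j := by simp [subcube]

lemma sum_restrict (J : Finset (Fin d)) (z : Fin d → Bool) (F : (Fin d → Bool) → ℝ) :
    ∑ x : Fin d → Bool, F (fun j => if j ∈ J then z j else x j)
      = 2 ^ J.card * ∑ y ∈ subcube J z, F y := by
  classical
  have hcomp := Finset.sum_comp (s := (Finset.univ : Finset (Fin d → Bool))) F
    (fun x j => if j ∈ J then z j else x j)
  have himg : (Finset.univ.image fun (x : Fin d → Bool) j => if j ∈ J then z j else x j)
      = subcube J z := by
    ext y
    simp only [Finset.mem_image, Finset.mem_univ, true_and, mem_subcube]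
    constructor
    · rintro ⟨x, rfl⟩ j hj; simp [hj]
    · intro h
      refine ⟨y, funext fun j => ?_⟩
      by_cases hj : j ∈ J
      · simp [hj, (h j hj).symm]
      · simp [hj]
  have hfib : ∀ y ∈ subcube J z,
      (Finset.univ.filter fun x : Fin d → Bool =>
        (fun j => if j ∈ J then z j else x j) = y).card = 2 ^ J.card := by
    intro y hy
    have hy' := mem_subcube.mp hy
    have hfil : (Finset.univ.filter fun x : Fin d → Bool =>
        (fun j => if j ∈ J then z j else x j) = y)
        = Fintype.piFinset (fun j => if j ∈ J then (Finset.univ : Finset Bool) else {y j}) := by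
      ext x
      simp only [Finset.mem_filter, Finset.mem_univ, true_and, Fintype.mem_piFinset]
      constructor
      · rintro rfl j
        by_cases hj : j ∈ J <;> simp [hj]
      · intro h
        funext j
        by_cases hj : j ∈ J
        · simp [hj, hy' j hj]
        · have := h j; simp [hj] at this; simp [hj, this]
    rw [hfil, Fintype.card_piFinset]
    have hone : ∀ j : Fin d,
        ((if j ∈ J then (Finset.univ : Finset Bool) else {y j})).card
          = if j ∈ J then 2 else 1 := by
      intro j; split <;> simp
    rw [Finset.prod_congr rfl fun j _ => hone j, Finset.prod_ite, Finset.prod_const,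
      Finset.prod_const_one, mul_one]
    congr 1
    have : Finset.univ.filter (fun j : Fin d => j ∈ J) = J := by ext j; simp
    rw [this]
  calc ∑ x : Fin d → Bool, F (fun j => if j ∈ J then z j else x j)
      = ∑ b ∈ (Finset.univ.image fun (x : Fin d → Bool) j => if j ∈ J then z j else x j),
          (Finset.univ.filter fun x : Fin d → Bool =>
            (fun j => if j ∈ J then z j else x j) = b).card • F b := hcomp
    _ = ∑ b ∈ subcube J z, (2 ^ J.card : ℕ) • F b := by
        rw [himg]; exact Finset.sum_congr rfl fun y hy => by rw [hfib y hy]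
    _ = 2 ^ J.card * ∑ y ∈ subcube J z, F y := by
        rw [Finset.mul_sum]
        refine Finset.sum_congr rfl fun y _ => ?_
        rw [nsmul_eq_mul]; push_cast; ring

lemma card_subcube (J : Finset (Fin d)) (z : Fin d → Bool) :
    (subcube J z).card = 2 ^ (d - J.card) := by
  classical
  have hpi : subcube J z
      = Fintype.piFinset (fun j => if j ∈ J then ({z j} : Finset Bool) else Finset.univ) := by
    ext x
    rw [mem_subcube, Fintype.mem_piFinset]
    constructor
    · intro h j; by_cases hj : j ∈ J <;> simp [hj, h]
    · intro h j hj; have := h j; simpa [hj] using this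
  rw [hpi, Fintype.card_piFinset]
  have hone : ∀ j : Fin d,
      ((if j ∈ J then ({z j} : Finset Bool) else Finset.univ)).card
        = if j ∈ J then 1 else 2 := by
    intro j; split <;> simp
  rw [Finset.prod_congr rfl fun j _ => hone j, Finset.prod_ite, Finset.prod_const_one,
    Finset.prod_const, one_mul]
  congr 1
  have hcompl : Finset.univ.filter (fun j : Fin d => ¬ j ∈ J) = Jᶜ := by ext j; simp
  rw [hcompl, Finset.card_compl, Fintype.card_fin]

lemma cubeMean_restrict (J : Finset (Fin d)) (z : Fin d → Bool) (F : (Fin d → Bool) → ℝ) :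
    cubeMean (fun x => F (fun j => if j ∈ J then z j else x j))
      = (∑ y ∈ subcube J z, F y) / (subcube J z).card := by
  rw [cubeMean, sum_restrict, card_subcube]
  have hJd : J.card ≤ d := by
    have := Finset.card_le_univ J
    simpa using this
  have h2 : (2:ℝ)^d = 2^(J.card) * 2^(d - J.card) := by
    rw [← pow_add]; congr 1; omega
  push_cast
  rw [h2, mul_div_mul_left _ _ (by positivity : (2:ℝ)^J.card ≠ 0)]

lemma subcubeMean_eq (f : (Fin d → Bool) → ℝ) (J : Finset (Fin d)) (z : Fin d → Bool) :
    subcubeMean f J z = cubeMean (restrictCube f J z) :=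
  (cubeMean_restrict J z f).symm

lemma subcubeCov_eq (f g : (Fin d → Bool) → ℝ) (J : Finset (Fin d)) (z : Fin d → Bool) :
    subcubeCov f g J z
      = cubeMean (fun x => (restrictCube f J z x - cubeMean (restrictCube f J z))
          * (restrictCube g J z x - cubeMean (restrictCube g J z))) := by
  rw [subcubeCov, subcubeMean_eq f, subcubeMean_eq g]
  exact (cubeMean_restrict J z (fun y => (f y - cubeMean (restrictCube f J z))
    * (g y - cubeMean (restrictCube g J z)))).symm

lemma subcubeVar_eq (f : (Fin d → Bool) → ℝ) (J : Finset (Fin d)) (z : Fin d → Bool) :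
    subcubeVar f J z = cubeVar (restrictCube f J z) := by
  rw [show subcubeVar f J z = subcubeCov f f J z from rfl, subcubeCov_eq, cubeVar]
  congr 1; funext x; ring

lemma fourierCoeff_restrict (g : (Fin d → Bool) → ℝ) (D : Finset (Fin d)) (z : Fin d → Bool)
    (T : Finset (Fin d)) :
    fourierCoeff (restrictCube g D z) T
      = ∑ S ∈ Finset.univ.filter (fun S : Finset (Fin d) => S \ D = T),
          fourierCoeff g S * chi (S ∩ D) z := by
  classical
  have hchi : ∀ (S : Finset (Fin d)) (x : Fin d → Bool),
      chi S (fun j => if j ∈ D then z j else x j) = chi (S ∩ D) z * chi (S \ D) x := by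
    intro S x
    rw [chi]
    rw [show (∏ j ∈ S, sgn (if j ∈ D then z j else x j))
        = ∏ j ∈ S, (if j ∈ D then sgn (z j) else sgn (x j)) from
      Finset.prod_congr rfl fun j _ => by split <;> rfl]
    have e1 : S.filter (fun j => j ∈ D) = S ∩ D := by ext j; simp
    have e2 : S.filter (fun j => ¬ j ∈ D) = S \ D := by ext j; simp
    rw [Finset.prod_ite, e1, e2, chi, chi]
  have hrep : (fun x => restrictCube g D z x * chi T x)
      = fun x => ∑ S : Finset (Fin d),
          (fourierCoeff g S * chi (S ∩ D) z) * (chi (S \ D) x * chi T x) := by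
    funext x
    rw [show restrictCube g D z x = g (fun j => if j ∈ D then z j else x j) from rfl]
    rw [← fourier_inversion g (fun j => if j ∈ D then z j else x j), Finset.sum_mul]
    refine Finset.sum_congr rfl fun S _ => ?_
    rw [hchi]; ring
  rw [fourierCoeff, hrep, cubeMean_sum]
  have hterm : ∀ S : Finset (Fin d),
      cubeMean (fun x => (fourierCoeff g S * chi (S ∩ D) z) * (chi (S \ D) x * chi T x))
        = (fourierCoeff g S * chi (S ∩ D) z) * (if S \ D = T then (1:ℝ) else 0) := by
    intro S; rw [cubeMean_const_mul, cubeMean_chi_mul_chi]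
  rw [Finset.sum_congr rfl fun S _ => hterm S]
  rw [Finset.sum_filter]
  refine Finset.sum_congr rfl fun S _ => ?_
  split <;> simp

lemma restrict_sgn_eq_chi {J : Finset (Fin d)} {k : Fin d} (hk : k ∉ J) (z : Fin d → Bool) :
    restrictCube (fun y => sgn (y k)) J z = chi {k} := by
  funext x
  simp [restrictCube, chi, hk, Finset.prod_singleton]

lemma cubeMean_chi_singleton (k : Fin d) : cubeMean (chi ({k} : Finset (Fin d))) = 0 := by
  have h := cubeMean_chi_mul_chi ({k} : Finset (Fin d)) ∅
  rw [if_neg (by simp)] at h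
  rw [← h]
  congr 1; funext x; rw [chi_empty, mul_one]

lemma fourierCoeff_restrict_singleton_mem {J : Finset (Fin d)} {k : Fin d} (hk : k ∈ J)
    (f : (Fin d → Bool) → ℝ) (z : Fin d → Bool) :
    fourierCoeff (restrictCube f J z) {k} = 0 := by
  classical
  rw [fourierCoeff_restrict]
  refine Finset.sum_eq_zero fun S hS => ?_
  exfalso
  have h1 : S \ J = {k} := (Finset.mem_filter.mp hS).2
  have h2 : k ∈ S \ J := h1 ▸ Finset.mem_singleton_self k
  exact (Finset.mem_sdiff.mp h2).2 hk

lemma subcubeCov_sgn (f : (Fin d → Bool) → ℝ) (J : Finset (Fin d)) (z : Fin d → Bool)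
    (k : Fin d) :
    subcubeCov f (fun y => sgn (y k)) J z = fourierCoeff (restrictCube f J z) {k} := by
  classical
  by_cases hk : k ∈ J
  · have hg : restrictCube (fun y => sgn (y k)) J z = fun _ => sgn (z k) := by
      funext x; simp [restrictCube, hk]
    rw [subcubeCov_eq, hg, cubeMean_const, fourierCoeff_restrict_singleton_mem hk]
    simp only [sub_self, mul_zero]
    exact cubeMean_const 0
  · rw [subcubeCov_eq, restrict_sgn_eq_chi hk, cubeMean_chi_singleton]
    simp only [sub_zero]
    have expand : (fun x => (restrictCube f J z x - cubeMean (restrictCube f J z)) * chi {k} x)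
        = fun x => restrictCube f J z x * chi {k} x
            + (-(cubeMean (restrictCube f J z))) * chi {k} x := by
      funext x; ring
    rw [expand, cubeMean_add, cubeMean_const_mul, cubeMean_chi_singleton, mul_zero, add_zero]
    rfl

lemma subcubeVar_sgn {J : Finset (Fin d)} {k : Fin d} (hk : k ∉ J) (z : Fin d → Bool) :
    subcubeVar (fun y => sgn (y k)) J z = 1 := by
  rw [show subcubeVar (fun y => sgn (y k)) J z = subcubeCov (fun y => sgn (y k)) (fun y => sgn (y k)) J z from rfl]
  rw [subcubeCov_eq, restrict_sgn_eq_chi hk, cubeMean_chi_singleton]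
  simp only [sub_zero]
  have h := cubeMean_chi_mul_chi ({k} : Finset (Fin d)) {k}
  rw [if_pos rfl] at h
  exact h

lemma restrictCube_comp (f : (Fin d → Bool) → ℝ) (J : Finset (Fin d)) (z : Fin d → Bool)
    (D : Finset (Fin d)) (w : Fin d → Bool) :
    restrictCube (restrictCube f J z) D w
      = restrictCube f (J ∪ D) (fun j => if j ∈ J then z j else w j) := by
  funext x
  simp only [restrictCube]
  congr 1
  funext j
  by_cases hJ : j ∈ J <;> by_cases hD : j ∈ D <;> simp [hJ, hD]

end SMSPProofAux2

section SMSPProofAux3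

variable {d : ℕ}

lemma listUnion_cons (a : Finset (Fin d)) (L : List (Finset (Fin d))) :
    listUnion (a :: L) = a ∪ listUnion L := rfl

lemma listUnion_nil : listUnion ([] : List (Finset (Fin d))) = ∅ := rfl

lemma listUnion_append (L1 L2 : List (Finset (Fin d))) :
    listUnion (L1 ++ L2) = listUnion L1 ∪ listUnion L2 := by
  induction L1 with
  | nil => simp [listUnion_nil, listUnion_cons]
  | cons a L ih => simp [listUnion_cons, List.cons_append, ih, Finset.union_assoc]

lemma subset_listUnion_of_mem {L : List (Finset (Fin d))} {T : Finset (Fin d)} (h : T ∈ L) :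
    T ⊆ listUnion L := by
  induction L with
  | nil => simp at h
  | cons a L ih =>
    rw [listUnion_cons]
    rcases List.mem_cons.mp h with rfl | h'
    · exact Finset.subset_union_left
    · exact (ih h').trans Finset.subset_union_right

lemma listUnion_subset_of {L : List (Finset (Fin d))} {X : Finset (Fin d)}
    (h : ∀ T ∈ L, T ⊆ X) : listUnion L ⊆ X := by
  induction L with
  | nil => simp [listUnion_nil]
  | cons a L ih =>
    rw [listUnion_cons]
    exact Finset.union_subset (h a (by simp)) (ih fun T hT => h T (by simp [hT]))

lemma listUnion_eq_empty_of {L : List (Finset (Fin d))} (h : ∀ T ∈ L, T = ∅) :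
    listUnion L = ∅ := by
  rw [← Finset.subset_empty]
  exact listUnion_subset_of fun T hT => by rw [h T hT]

lemma staircase_nil : Staircase ([] : List (Finset (Fin d))) := by
  intro i hi; simp at hi

lemma staircase_concat {L : List (Finset (Fin d))} {S : Finset (Fin d)}
    (hL : Staircase L) (hS : (S \ listUnion L).card ≤ 1) : Staircase (L ++ [S]) := by
  intro i hi
  by_cases h : i < L.length
  · have hget : (L ++ [S]).get ⟨i, hi⟩ = L.get ⟨i, h⟩ := by
      simp [List.get_eq_getElem, List.getElem_append_left h]
    have htake : (L ++ [S]).take i = L.take i := by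
      rw [List.take_append,
        Nat.sub_eq_zero_of_le (le_of_lt h), List.take_zero, List.append_nil]
    rw [hget, htake]
    exact hL i h
  · have hi' : i = L.length := by
      have := hi
      rw [List.length_append, List.length_singleton] at this
      omega
    subst hi'
    have hget : (L ++ [S]).get ⟨L.length, hi⟩ = S := by
      simp [List.get_eq_getElem]
    have htake : (L ++ [S]).take L.length = L := by
      rw [List.take_append, Nat.sub_self, List.take_zero, List.append_nil,
        List.take_length]
    rw [hget, htake]
    exact hS

lemma staircase_append {L1 L2 : List (Finset (Fin d))}
    (h1 : Staircase L1) (h2 : Staircase L2) : Staircase (L1 ++ L2) := by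
  intro i hi
  by_cases h : i < L1.length
  · have hget : (L1 ++ L2).get ⟨i, hi⟩ = L1.get ⟨i, h⟩ := by
      simp [List.get_eq_getElem, List.getElem_append_left h]
    have htake : (L1 ++ L2).take i = L1.take i := by
      rw [List.take_append,
        Nat.sub_eq_zero_of_le (le_of_lt h), List.take_zero, List.append_nil]
    rw [hget, htake]
    exact h1 i h
  · have hj : i - L1.length < L2.length := by
      rw [List.length_append] at hi; omega
    have hget : (L1 ++ L2).get ⟨i, hi⟩ = L2.get ⟨i - L1.length, hj⟩ := by
      simp [List.get_eq_getElem, List.getElem_append_right (by omega : L1.length ≤ i)]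
    have htake : (L1 ++ L2).take i = L1 ++ L2.take (i - L1.length) := by
      rw [List.take_append, List.take_of_length_le (by omega : L1.length ≤ i)]
    rw [hget, htake, listUnion_append]
    refine le_trans (Finset.card_le_card ?_) (h2 (i - L1.length) hj)
    exact Finset.sdiff_subset_sdiff (Finset.Subset.refl _) Finset.subset_union_right

lemma reaches_of_card_le {Sc : Finset (Finset (Fin d))} {L0 : List (Finset (Fin d))}
    (hL0 : ∀ T ∈ L0, T ∈ Sc) (hst : Staircase L0)
    {S : Finset (Fin d)} (hS : S ∈ Sc) (hc : (S \ listUnion L0).card ≤ 1) :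
    ReachesEmpty Sc S := by
  refine ⟨L0 ++ [S], ?_, List.mem_append.mpr (Or.inr (by simp)), staircase_concat hst hc⟩
  intro T hT
  rcases List.mem_append.mp hT with h | h
  · exact hL0 T h
  · rw [List.mem_singleton.mp h]; exact hS

lemma exists_cover {Sc : Finset (Finset (Fin d))} :
    ∀ l : List (Finset (Fin d)), (∀ S ∈ l, ReachesEmpty Sc S) →
    ∃ L0 : List (Finset (Fin d)), (∀ T ∈ L0, T ∈ Sc) ∧ Staircase L0 ∧
      ∀ S ∈ l, S ⊆ listUnion L0 := by
  intro l
  induction l with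
  | nil => exact fun _ => ⟨[], by simp, staircase_nil, by simp⟩
  | cons S l ih =>
    intro h
    obtain ⟨M, hM1, hM2, hM3⟩ := h S (by simp)
    obtain ⟨L0, hL1, hL2, hL3⟩ := ih (fun T hT => h T (by simp [hT]))
    refine ⟨M ++ L0, ?_, staircase_append hM3 hL2, ?_⟩
    · intro T hT
      rcases List.mem_append.mp hT with h' | h'
      exacts [hM1 T h', hL1 T h']
    · intro T hT
      rw [listUnion_append]
      rcases List.mem_cons.mp hT with rfl | h'
      · exact (subset_listUnion_of_mem hM2).trans Finset.subset_union_left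
      · exact (hL3 T h').trans Finset.subset_union_right

lemma msp_of_forall_reaches {Sc : Finset (Finset (Fin d))}
    (h : ∀ S ∈ Sc, ReachesEmpty Sc S) : MSP Sc := by
  classical
  suffices aux : ∀ (m : ℕ) (A : Finset (Finset (Fin d))) (L : List (Finset (Fin d))),
      A ⊆ Sc → (Sc \ A).card ≤ m → L.Nodup → L.toFinset = A → Staircase L →
      ∃ L' : List (Finset (Fin d)), L'.toFinset = Sc ∧ L'.Nodup ∧ Staircase L' by
    exact aux Sc.card ∅ List.nil (Finset.empty_subset _)
      (by rw [Finset.sdiff_empty]) List.nodup_nil (by simp) staircase_nil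
  intro m
  induction m with
  | zero =>
    intro A L hAS hcard hnd ht hst
    have hempty : Sc \ A = ∅ := Finset.card_eq_zero.mp (Nat.le_antisymm hcard (Nat.zero_le _))
    have hAeq : A = Sc := by
      refine Finset.Subset.antisymm hAS fun S hS => ?_
      by_contra hS'
      have : S ∈ Sc \ A := Finset.mem_sdiff.mpr ⟨hS, hS'⟩
      rw [hempty] at this
      simp at this
    exact ⟨L, by rw [ht, hAeq], hnd, hst⟩
  | succ m ih =>
    intro A L hAS hcard hnd ht hst
    by_cases hAeq : A = Sc
    · exact ⟨L, by rw [ht, hAeq], hnd, hst⟩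
    · obtain ⟨S', hS'⟩ : (Sc \ A).Nonempty := by
        rw [Finset.sdiff_nonempty]
        intro hsub
        exact hAeq (Finset.Subset.antisymm hAS hsub)
      obtain ⟨hS'Sc, hS'A⟩ := Finset.mem_sdiff.mp hS'
      obtain ⟨M, hM1, hM2, hM3⟩ := h S' hS'Sc
      have hPex : ∃ i : ℕ, ∃ hi : i < M.length, M.get ⟨i, hi⟩ ∉ A := by
        obtain ⟨i0, hi0⟩ := List.mem_iff_get.mp hM2
        exact ⟨i0, i0.isLt, by rw [hi0]; exact hS'A⟩
      obtain ⟨hn, hTnA⟩ := Nat.find_spec hPex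
      set T := M.get ⟨Nat.find hPex, hn⟩ with hTdef
      have hTSc : T ∈ Sc := hM1 _ (List.get_mem M ⟨Nat.find hPex, hn⟩)
      have hpre : ∀ X ∈ M.take (Nat.find hPex), X ∈ A := by
        intro X hX
        obtain ⟨j, hj⟩ := List.mem_iff_get.mp hX
        have h1 : (M.take (Nat.find hPex)).length ≤ Nat.find hPex := by
          rw [List.length_take]; omega
        have h2 : (M.take (Nat.find hPex)).length ≤ M.length := by
          rw [List.length_take]; omega
        have hjn : (j : ℕ) < Nat.find hPex := lt_of_lt_of_le j.isLt h1
        have hjM : (j : ℕ) < M.length := lt_of_lt_of_le j.isLt h2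
        have hmin := Nat.find_min hPex hjn
        push_neg at hmin
        have hgt : (M.take (Nat.find hPex)).get j = M.get ⟨j, hjM⟩ := by
          simp [List.get_eq_getElem, List.getElem_take]
        rw [← hj, hgt]
        exact hmin hjM
      have hsub1 : listUnion (M.take (Nat.find hPex)) ⊆ listUnion L := by
        refine listUnion_subset_of fun X hX => subset_listUnion_of_mem ?_
        have hXA : X ∈ A := hpre X hX
        rw [← ht] at hXA
        exact List.mem_toFinset.mp hXA
      have hcard1 : (T \ listUnion L).card ≤ 1 := by
        refine le_trans (Finset.card_le_card
          (Finset.sdiff_subset_sdiff (Finset.Subset.refl T) hsub1)) ?_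
        exact hM3 (Nat.find hPex) hn
      have hTL : T ∉ L := fun hTL => hTnA (by rw [← ht]; exact List.mem_toFinset.mpr hTL)
      have hnd' : (L ++ [T]).Nodup := by
        rw [List.nodup_append]
        exact ⟨hnd, List.nodup_singleton T, by
          intro a ha b hb hab
          rw [List.mem_singleton] at hb
          subst hb
          exact hTL (hab ▸ ha)⟩
      have ht' : (L ++ [T]).toFinset = insert T A := by
        rw [List.toFinset_append, ht]
        simp only [List.toFinset_cons, List.toFinset_nil, LawfulSingleton.insert_empty_eq]
        rw [Finset.union_comm, ← Finset.insert_eq]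
      have hsub' : insert T A ⊆ Sc := Finset.insert_subset hTSc hAS
      have hTm : T ∈ Sc \ A := Finset.mem_sdiff.mpr ⟨hTSc, hTnA⟩
      have hsubset : Sc \ insert T A ⊆ Sc \ A :=
        Finset.sdiff_subset_sdiff (Finset.Subset.refl _) (Finset.subset_insert _ _)
      have hTnot : T ∉ Sc \ insert T A := by simp
      have hlt : (Sc \ insert T A).card < (Sc \ A).card :=
        Finset.card_lt_card ((Finset.ssubset_iff_of_subset hsubset).mpr ⟨T, hTm, hTnot⟩)
      have hcard' : (Sc \ insert T A).card ≤ m := by omega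
      exact ih (insert T A) (L ++ [T]) hsub' hcard' hnd' ht' (staircase_concat hst hcard1)

end SMSPProofAux3

section SMSPProofAux4

variable {d : ℕ}

lemma exists_singleton_of_msp {Sc : Finset (Finset (Fin d))} (h : MSP Sc)
    {S0 : Finset (Fin d)} (hS0 : S0 ∈ Sc) (hne : S0 ≠ ∅) : ∃ k : Fin d, {k} ∈ Sc := by
  classical
  obtain ⟨L, hLt, hnd, hst⟩ := h
  have hmem : S0 ∈ L := by rw [← List.mem_toFinset, hLt]; exact hS0
  have hPex : ∃ i : ℕ, ∃ hi : i < L.length, L.get ⟨i, hi⟩ ≠ ∅ := by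
    obtain ⟨i0, hi0⟩ := List.mem_iff_get.mp hmem
    exact ⟨i0, i0.isLt, by rw [hi0]; exact hne⟩
  obtain ⟨hn, hne'⟩ := Nat.find_spec hPex
  have hprefix : ∀ T ∈ L.take (Nat.find hPex), T = ∅ := by
    intro T hT
    obtain ⟨j, hj⟩ := List.mem_iff_get.mp hT
    have h1 : (L.take (Nat.find hPex)).length ≤ Nat.find hPex := by
      rw [List.length_take]; omega
    have h2 : (L.take (Nat.find hPex)).length ≤ L.length := by
      rw [List.length_take]; omega
    have hjn : (j : ℕ) < Nat.find hPex := lt_of_lt_of_le j.isLt h1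
    have hjL : (j : ℕ) < L.length := lt_of_lt_of_le j.isLt h2
    have hmin := Nat.find_min hPex hjn
    push_neg at hmin
    have hgt : (L.take (Nat.find hPex)).get j = L.get ⟨j, hjL⟩ := by
      simp [List.get_eq_getElem, List.getElem_take]
    rw [← hj, hgt]
    exact hmin hjL
  have hU : listUnion (L.take (Nat.find hPex)) = ∅ := listUnion_eq_empty_of hprefix
  have hcard := hst (Nat.find hPex) hn
  rw [hU, Finset.sdiff_empty] at hcard
  have hpos : 0 < (L.get ⟨Nat.find hPex, hn⟩).card :=
    Finset.card_pos.mpr (Finset.nonempty_iff_ne_empty.mpr hne')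
  have h1 : (L.get ⟨Nat.find hPex, hn⟩).card = 1 := le_antisymm hcard hpos
  obtain ⟨k, hk⟩ := Finset.card_eq_one.mp h1
  refine ⟨k, ?_⟩
  rw [← hLt, List.mem_toFinset, ← hk]
  exact List.get_mem L _

lemma mem_fourierSupport {g : (Fin d → Bool) → ℝ} {S : Finset (Fin d)} :
    S ∈ fourierSupport g ↔ fourierCoeff g S ≠ 0 := by
  rw [fourierSupport, Finset.mem_filter]
  simp

lemma not_msp_bad (g : (Fin d → Bool) → ℝ) (hm : ¬ MSP (fourierSupport g)) :
    ∃ (D : Finset (Fin d)) (w : Fin d → Bool),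
      0 < cubeVar (restrictCube g D w) ∧
        ∀ k : Fin d, fourierCoeff (restrictCube g D w) {k} = 0 := by
  classical
  set Sc := fourierSupport g with hScdef
  obtain ⟨S0, hS0Sc, hS0r⟩ : ∃ S0 ∈ Sc, ¬ ReachesEmpty Sc S0 := by
    by_contra hc
    push_neg at hc
    exact hm (msp_of_forall_reaches hc)
  obtain ⟨L0, hL01, hL02, hL03⟩ := exists_cover (Sc := Sc)
    ((Sc.filter (fun S => ReachesEmpty Sc S)).toList)
    (fun S hS => (Finset.mem_filter.mp (Finset.mem_toList.mp hS)).2)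
  set D := listUnion L0 with hDdef
  have hbig : ∀ S ∈ Sc, ¬ ReachesEmpty Sc S → 2 ≤ (S \ D).card := by
    intro S hS hr
    by_contra hc
    exact hr (reaches_of_card_le hL01 hL02 hS (by rw [← hDdef]; omega))
  have hsubD : ∀ S ∈ Sc, ReachesEmpty Sc S → S ⊆ D := by
    intro S hS hr
    exact hL03 S (Finset.mem_toList.mpr (Finset.mem_filter.mpr ⟨hS, hr⟩))
  have hsing : ∀ (w : Fin d → Bool) (k : Fin d),
      fourierCoeff (restrictCube g D w) {k} = 0 := by
    intro w k
    rw [fourierCoeff_restrict]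
    refine Finset.sum_eq_zero fun S hS => ?_
    have hSd : S \ D = {k} := (Finset.mem_filter.mp hS).2
    rcases eq_or_ne (fourierCoeff g S) 0 with h0 | h0
    · rw [h0, zero_mul]
    · exfalso
      have hSSc : S ∈ Sc := mem_fourierSupport.mpr h0
      by_cases hr : ReachesEmpty Sc S
      · have hsub : S ⊆ D := hsubD S hSSc hr
        have : S \ D = ∅ := Finset.sdiff_eq_empty_iff_subset.mpr hsub
        rw [hSd] at this
        simp at this
      · have h2 := hbig S hSSc hr
        rw [hSd] at h2
        simp at h2
  set T0 := S0 \ D with hT0def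
  have hcoef0 : fourierCoeff g S0 ≠ 0 := mem_fourierSupport.mp hS0Sc
  have hS0filt : S0 ∈ Finset.univ.filter (fun S : Finset (Fin d) => S \ D = T0) :=
    Finset.mem_filter.mpr ⟨Finset.mem_univ _, rfl⟩
  have hkey : ∑ w : Fin d → Bool, fourierCoeff (restrictCube g D w) T0 * chi (S0 ∩ D) w
      = 2 ^ d * fourierCoeff g S0 := by
    have hterm : ∀ w : Fin d → Bool,
        fourierCoeff (restrictCube g D w) T0 * chi (S0 ∩ D) w
          = ∑ S ∈ Finset.univ.filter (fun S : Finset (Fin d) => S \ D = T0),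
              fourierCoeff g S * (chi (S ∩ D) w * chi (S0 ∩ D) w) := by
      intro w
      rw [fourierCoeff_restrict, Finset.sum_mul]
      exact Finset.sum_congr rfl fun S _ => by ring
    rw [Finset.sum_congr rfl fun w _ => hterm w, Finset.sum_comm]
    have h2 : ∀ S ∈ Finset.univ.filter (fun S : Finset (Fin d) => S \ D = T0),
        ∑ w : Fin d → Bool, fourierCoeff g S * (chi (S ∩ D) w * chi (S0 ∩ D) w)
          = fourierCoeff g S * (if S ∩ D = S0 ∩ D then (2:ℝ)^d else 0) := by
      intro S _
      rw [← Finset.mul_sum, sum_chi_mul_chi]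
    rw [Finset.sum_congr rfl h2, Finset.sum_eq_single S0]
    · rw [if_pos rfl]; ring
    · intro S hSf hne
      rw [if_neg, mul_zero]
      intro heq
      apply hne
      have hSd : S \ D = T0 := (Finset.mem_filter.mp hSf).2
      ext j
      by_cases hj : j ∈ D
      · constructor
        · intro hjS
          have h3 : j ∈ S ∩ D := Finset.mem_inter.mpr ⟨hjS, hj⟩
          rw [heq] at h3
          exact (Finset.mem_inter.mp h3).1
        · intro hjS
          have h3 : j ∈ S0 ∩ D := Finset.mem_inter.mpr ⟨hjS, hj⟩
          rw [← heq] at h3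
          exact (Finset.mem_inter.mp h3).1
      · constructor
        · intro hjS
          have h3 : j ∈ S \ D := Finset.mem_sdiff.mpr ⟨hjS, hj⟩
          rw [hSd, hT0def] at h3
          exact (Finset.mem_sdiff.mp h3).1
        · intro hjS
          have h3 : j ∈ S0 \ D := Finset.mem_sdiff.mpr ⟨hjS, hj⟩
          rw [← hT0def, ← hSd] at h3
          exact (Finset.mem_sdiff.mp h3).1
    · intro habs
      exact absurd hS0filt habs
  have hex : ∃ w : Fin d → Bool, fourierCoeff (restrictCube g D w) T0 ≠ 0 := by
    by_contra hall
    push_neg at hall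
    have hzero : ∑ w : Fin d → Bool, fourierCoeff (restrictCube g D w) T0 * chi (S0 ∩ D) w
        = 0 := Finset.sum_eq_zero fun w _ => by rw [hall w, zero_mul]
    rw [hzero] at hkey
    have h2 : (2:ℝ)^d ≠ 0 := by positivity
    exact hcoef0 (by
      rcases mul_eq_zero.mp hkey.symm with h | h
      · exact absurd h h2
      · exact h)
  obtain ⟨w, hw⟩ := hex
  have hT0ne : T0 ≠ ∅ := by
    have h2 := hbig S0 hS0Sc hS0r
    intro habs
    rw [← hT0def, habs] at h2
    simp at h2
  exact ⟨D, w, (cubeVar_pos_iff _).mpr ⟨T0, hT0ne, hw⟩, hsing w⟩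

end SMSPProofAux4

/-- SMSP is equivalent to sufficient impurity decrease.
`f` satisfies SMSP iff there exists `λ > 0` such that for every subcube `C`
with `Var(f(X) | X ∈ C) > 0` one has
`max_{1 ≤ k ≤ d} Corr²(f(X), X_k | X ∈ C) ≥ λ`. -/
theorem smsp_iff_sufficient_impurity_decrease
    (d : ℕ) (f : (Fin d → Bool) → ℝ) :
    SMSPfun f ↔ ∃ lam : ℝ, 0 < lam ∧
      ∀ (J : Finset (Fin d)) (z : Fin d → Bool),
        0 < subcubeVar f J z →
        ∃ k : Fin d, lam ≤ (subcubeCov f (fun y => sgn (y k)) J z) ^ 2 /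
          (subcubeVar f J z * subcubeVar (fun y => sgn (y k)) J z) := by
  classical
  constructor
  · intro hsmsp
    set ratio : Finset (Fin d) × (Fin d → Bool) → Fin d → ℝ := fun p k =>
      (subcubeCov f (fun y => sgn (y k)) p.1 p.2) ^ 2 /
        (subcubeVar f p.1 p.2 * subcubeVar (fun y => sgn (y k)) p.1 p.2) with hratio
    have key : ∀ (J : Finset (Fin d)) (z : Fin d → Bool), 0 < subcubeVar f J z →
        ∃ k, 0 < ratio (J, z) k := by
      intro J z hV
      have hVcube : 0 < cubeVar (restrictCube f J z) := by
        rw [← subcubeVar_eq]; exact hV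
      obtain ⟨S, hSne, hScoef⟩ := (cubeVar_pos_iff _).mp hVcube
      have hmsp : MSP (fourierSupport (restrictCube f J z)) := hsmsp J z
      obtain ⟨k, hk⟩ := exists_singleton_of_msp hmsp (mem_fourierSupport.mpr hScoef) hSne
      have hkcoef : fourierCoeff (restrictCube f J z) {k} ≠ 0 := mem_fourierSupport.mp hk
      have hkJ : k ∉ J := fun hkJ =>
        hkcoef (fourierCoeff_restrict_singleton_mem hkJ f z)
      refine ⟨k, ?_⟩
      rw [hratio]
      simp only
      rw [subcubeVar_sgn hkJ, mul_one, subcubeCov_sgn]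
      exact div_pos ((sq_nonneg _).lt_of_ne (Ne.symm (pow_ne_zero 2 hkcoef))) hV
    set val : Finset (Fin d) × (Fin d → Bool) → ℝ := fun p =>
      if h : ∃ k, 0 < ratio p k then
        Finset.univ.sup' ⟨h.choose, Finset.mem_univ _⟩ (ratio p) else 1 with hval
    have hvalpos : ∀ p, 0 < val p := by
      intro p
      rw [hval]
      simp only
      split
      · next h => exact lt_of_lt_of_le h.choose_spec (Finset.le_sup' _ (Finset.mem_univ _))
      · norm_num
    have hne_img : ((Finset.univ : Finset (Finset (Fin d) × (Fin d → Bool))).image val).Nonempty :=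
      ⟨val (∅, fun _ => true), Finset.mem_image_of_mem val (Finset.mem_univ _)⟩
    refine ⟨(Finset.univ.image val).min' hne_img, ?_, ?_⟩
    · obtain ⟨p, _, hp⟩ := Finset.mem_image.mp ((Finset.univ.image val).min'_mem hne_img)
      rw [← hp]
      exact hvalpos p
    · intro J z hV
      obtain ⟨k0, hk0⟩ := key J z hV
      have hex : ∃ k, 0 < ratio (J, z) k := ⟨k0, hk0⟩
      have hvaleq : val (J, z)
          = Finset.univ.sup' ⟨hex.choose, Finset.mem_univ _⟩ (ratio (J, z)) := by
        rw [hval]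
        simp only
        rw [dif_pos hex]
      obtain ⟨k, _, hk⟩ := Finset.exists_mem_eq_sup'
        (⟨hex.choose, Finset.mem_univ _⟩ :
          (Finset.univ : Finset (Fin d)).Nonempty) (ratio (J, z))
      have h1 : (Finset.univ.image val).min' hne_img ≤ val (J, z) :=
        Finset.min'_le _ _ (Finset.mem_image_of_mem val (Finset.mem_univ _))
      rw [hvaleq, hk] at h1
      refine ⟨k, ?_⟩
      rw [hratio] at h1
      exact h1
  · rintro ⟨lam, hlam, hSID⟩
    intro J z
    by_contra hmsp
    obtain ⟨D, w, hVar, hsing⟩ := not_msp_bad (restrictCube f J z) hmsp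
    have hcomp := restrictCube_comp f J z D w
    have hV' : 0 < subcubeVar f (J ∪ D) (fun j => if j ∈ J then z j else w j) := by
      rw [subcubeVar_eq, ← hcomp]
      exact hVar
    obtain ⟨k, hk⟩ := hSID (J ∪ D) (fun j => if j ∈ J then z j else w j) hV'
    have hcov : subcubeCov f (fun y => sgn (y k)) (J ∪ D)
        (fun j => if j ∈ J then z j else w j) = 0 := by
      rw [subcubeCov_sgn, ← hcomp]
      exact hsing k
    rw [hcov] at hk
    norm_num at hk
    linarith

end GreedyTrees
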